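/- arXiv:math/0107050 — 3 statements merged into one kernel-verified Lean document; each statement's English description precedes it below -/
import Mathlib

section
/- Let G and H be Polish groups and f : G → H a continuous surjective group homomorphism. Then the induced map G/ker(f) → H is an isomorphism of topological groups; in particular f is an open map. -/
open Topology Filter Set TopologicalSpace
open scoped Pointwise

section MeagreHelpers

variable {X : Type*} [TopologicalSpace X]

private lemma my_isMeagre_iUnion {ι : Sort*} [Countable ι] {s : ι → Set X}
    (h : ∀ i, IsMeagre (s i)) : IsMeagre (⋃ i, s i) := by
  rw [IsMeagre, compl_iUnion]
  exact countable_iInter_mem.2 h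

private lemma my_isMeagre_union {s t : Set X} (hs : IsMeagre s) (ht : IsMeagre t) :
    IsMeagre (s ∪ t) := by
  rw [IsMeagre, compl_union]
  exact Filter.inter_mem hs ht

private lemma my_not_isMeagre_of_isOpen [BaireSpace X] {U : Set X} (hU : IsOpen U)
    (hne : U.Nonempty) : ¬ IsMeagre U := by
  intro h
  have hd : Dense Uᶜ := dense_of_mem_residual h
  obtain ⟨x, hxU, hxC⟩ := hd.inter_open_nonempty U hU hne
  exact hxC hxU

private lemma my_eventuallyEq_of_meagre_diff {s t : Set X} (hst : s ⊆ t)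
    (h : IsMeagre (t \ s)) : s =ᵇ t := by
  rw [eventuallyEq_set]
  have h' : (t \ s)ᶜ ∈ residual X := h
  filter_upwards [h'] with x hx
  exact ⟨fun h'' => hst h'', fun ht => by_contra fun hsx => hx ⟨ht, hsx⟩⟩

private lemma my_meagre_diff_of_eventuallyEq {s t : Set X} (h : s =ᵇ t) :
    IsMeagre (t \ s) := by
  rw [eventuallyEq_set] at h
  rw [IsMeagre]
  filter_upwards [h] with x hx
  exact fun hmem => hmem.2 (hx.2 hmem.1)

/-- Baire category envelope: every set `S` is contained in a Baire measurable set `E ⊆ closure S`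
such that every Baire measurable subset of `E \ S` is meagre. -/
private lemma my_exists_envelope [SecondCountableTopology X] [BaireSpace X] (S : Set X) :
    ∃ E : Set X, S ⊆ E ∧ E ⊆ closure S ∧ BaireMeasurableSet E ∧
      ∀ Z, Z ⊆ E \ S → BaireMeasurableSet Z → IsMeagre Z := by
  obtain ⟨b, bct, -, bbasis⟩ := exists_countable_basis X
  set T : Set (Set X) := {W | W ∈ b ∧ IsMeagre (W ∩ S)} with hT
  set O : Set X := ⋃₀ T with hOdef
  have hOopen : IsOpen O := isOpen_sUnion fun W hW => bbasis.isOpen hW.1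
  have hOS : IsMeagre (O ∩ S) := by
    haveI : Countable T := (bct.mono fun W hW => hW.1).to_subtype
    have hsub : O ∩ S ⊆ ⋃ W : T, ((W : Set X) ∩ S) := by
      rintro x ⟨hxO, hxS⟩
      obtain ⟨W, hWT, hxW⟩ := hxO
      exact mem_iUnion.2 ⟨⟨W, hWT⟩, hxW, hxS⟩
    exact (my_isMeagre_iUnion fun W => W.2.2).mono hsub
  refine ⟨(S ∪ Oᶜ) ∩ closure S, fun x hx => ⟨Or.inl hx, subset_closure hx⟩,
    inter_subset_right, ?_, ?_⟩
  · have hdecomp : S ∪ Oᶜ = (O ∩ S) ∪ Oᶜ := by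
      ext x
      constructor
      · rintro (hxS | hxO)
        · by_cases hx : x ∈ O
          · exact Or.inl ⟨hx, hxS⟩
          · exact Or.inr hx
        · exact Or.inr hxO
      · rintro (⟨-, hxS⟩ | hxO)
        · exact Or.inl hxS
        · exact Or.inr hxO
    rw [hdecomp]
    exact ((hOS.baireMeasurableSet).union
      (hOopen.isClosed_compl.isOpen_compl.baireMeasurableSet.of_compl)).inter
      (isClosed_closure.isOpen_compl.baireMeasurableSet.of_compl)
  · intro Z hZE hZbm
    by_contra hZnm
    obtain ⟨u, huo, hZu⟩ := hZbm.residualEq_isOpen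
    have huZ : IsMeagre (u \ Z) := my_meagre_diff_of_eventuallyEq hZu
    have hZu' : IsMeagre (Z \ u) := my_meagre_diff_of_eventuallyEq hZu.symm
    have hune : u.Nonempty := by
      rcases u.eq_empty_or_nonempty with h | h
      · refine absurd (hZu'.mono ?_) hZnm
        intro x hx
        exact ⟨hx, by simp [h]⟩
      · exact h
    obtain ⟨x, hxu⟩ := hune
    obtain ⟨W, hWb, hxW, hWu⟩ := bbasis.exists_subset_of_mem_open hxu huo
    have hZS : ∀ y ∈ Z, y ∉ S := fun y hy => (hZE hy).2
    have hWS : IsMeagre (W ∩ S) := by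
      refine huZ.mono (fun y ⟨hyW, hyS⟩ => ⟨hWu hyW, fun hyZ => hZS y hyZ hyS⟩ : W ∩ S ⊆ u \ Z)
    have hWO : W ⊆ O := fun y hy => ⟨W, ⟨hWb, hWS⟩, hy⟩
    have hZO : ∀ y ∈ Z, y ∉ O := by
      intro y hy
      rcases (hZE hy).1 with (h1 | h2)
      · exact absurd h1 (hZS y hy)
      · exact h2
    have hWZ : W ⊆ u \ Z := by
      intro y hy
      refine ⟨hWu hy, fun hyZ => hZO y hyZ (hWO hy)⟩
    exact my_not_isMeagre_of_isOpen (bbasis.isOpen hWb) ⟨x, hxW⟩ (huZ.mono hWZ)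

end MeagreHelpers

/-- The continuous image of an open subset of a Polish space in a Polish space is
Baire measurable. (A special case of the fact that analytic sets have the Baire property.) -/
private lemma my_bp_image {G H : Type*} [TopologicalSpace G] [PolishSpace G]
    [TopologicalSpace H] [PolishSpace H] {f : G → H} (hf : Continuous f)
    {V : Set G} (hV : IsOpen V) : BaireMeasurableSet (f '' V) := by
  letI := upgradeIsCompletelyMetrizable G
  letI := upgradeIsCompletelyMetrizable H
  obtain ⟨b, bct, bne, bbasis⟩ := exists_countable_basis G
  choose env henv1 henv2 henv3 henv4 using fun S : Set H => my_exists_envelope S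
  set N : Set G → Set (Set G) := fun W =>
    {W' | W' ∈ b ∧ closure W' ⊆ W ∧ EMetric.diam W' ≤ min (EMetric.diam W) 1 / 2} with hN
  have hNb : ∀ W, N W ⊆ b := fun W W' hW' => hW'.1
  -- covering lemma
  have cover : ∀ W : Set G, IsOpen W → W ⊆ ⋃₀ N W := by
    intro W hW g hg
    rcases eq_or_ne (EMetric.diam W) 0 with hd | hd
    · obtain ⟨W', hW'b, hgW', hW'W⟩ := bbasis.exists_subset_of_mem_open hg hW
      have hWsing : W = {g} := (EMetric.diam_eq_zero_iff.1 hd).eq_singleton_of_mem hg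
      have hW'sing : W' = {g} := by
        apply Subset.antisymm (hWsing ▸ hW'W)
        intro y hy
        rw [mem_singleton_iff] at hy
        exact hy ▸ hgW'
      refine ⟨W', ⟨hW'b, ?_, ?_⟩, hgW'⟩
      · rw [hW'sing, closure_singleton, hWsing]
      · rw [hW'sing]
        exact (le_of_eq EMetric.diam_singleton).trans (zero_le)
    · set ε : ENNReal := min (EMetric.diam W) 1 / 2 with hε
      have hεpos : 0 < ε :=
        ENNReal.div_pos (ne_of_gt (lt_min (pos_iff_ne_zero.2 hd) one_pos)) (by simp)
      obtain ⟨r, hr0, hrW⟩ := EMetric.isOpen_iff.1 hW g hg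
      set r' : ENNReal := min r 1 with hr'
      have hr'0 : 0 < r' := lt_min hr0 one_pos
      have hr'top : r' ≠ ⊤ := ne_top_of_le_ne_top ENNReal.one_ne_top (min_le_right _ _)
      have hr'W : EMetric.ball g r' ⊆ W :=
        (EMetric.ball_subset_ball (min_le_left _ _)).trans hrW
      set ρ : ENNReal := min (ε / 2) (r' / 2) with hρ
      have hρ0 : 0 < ρ := lt_min (ENNReal.div_pos (ne_of_gt hεpos) (by simp))
        (ENNReal.div_pos (ne_of_gt hr'0) (by simp))
      obtain ⟨W', hW'b, hgW', hW'ball⟩ :=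
        bbasis.exists_subset_of_mem_open (EMetric.mem_ball_self hρ0) EMetric.isOpen_ball
      refine ⟨W', ⟨hW'b, ?_, ?_⟩, hgW'⟩
      · -- closure W' ⊆ W
        have hcb : IsClosed {y : G | edist y g ≤ ρ} :=
          isClosed_le (continuous_id.edist continuous_const) continuous_const
        have h1 : closure W' ⊆ {y : G | edist y g ≤ ρ} :=
          closure_minimal (fun y hy => (le_of_lt (EMetric.mem_ball.1 (hW'ball hy)) :
            edist y g ≤ ρ)) hcb
        refine h1.trans (fun y hy => hr'W ?_)
        have : ρ < r' := lt_of_le_of_lt (min_le_right _ _) (ENNReal.half_lt_self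
          (ne_of_gt hr'0) hr'top)
        exact lt_of_le_of_lt hy this
      · -- diam bound
        calc EMetric.diam W' ≤ EMetric.diam (EMetric.ball g ρ) := EMetric.diam_mono hW'ball
          _ ≤ 2 * ρ := EMetric.diam_ball
          _ ≤ 2 * (ε / 2) := mul_le_mul_right (min_le_left _ _) 2
          _ = ε := ENNReal.mul_div_cancel two_ne_zero (by simp)
  -- the scheme
  set M : Set H := ⋃ W ∈ b, (env (f '' W) \ ⋃ W' ∈ N W, env (f '' W')) with hM
  have hMm : IsMeagre M := by
    haveI : Countable b := bct.to_subtype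
    rw [hM, biUnion_eq_iUnion]
    apply my_isMeagre_iUnion
    rintro ⟨W, hWb⟩
    apply henv4 (f '' W)
    · intro y ⟨hy1, hy2⟩
      refine ⟨hy1, fun hyW => hy2 ?_⟩
      obtain ⟨w, hwW, rfl⟩ := hyW
      obtain ⟨W', hW'N, hwW'⟩ := cover W (bbasis.isOpen hWb) hwW
      exact mem_biUnion hW'N (henv1 _ ⟨w, hwW', rfl⟩)
    · exact (henv3 _).diff (BaireMeasurableSet.biUnion
        ((bct.mono (hNb W))) fun W' _ => henv3 _)
  set T : Set H := ⋃ W ∈ {W | W ∈ b ∧ W ⊆ V}, env (f '' W) with hTdef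
  have hTbm : BaireMeasurableSet T :=
    BaireMeasurableSet.biUnion (bct.mono fun W hW => hW.1) fun W _ => henv3 _
  have hsub : f '' V ⊆ T := by
    rintro y ⟨v, hvV, rfl⟩
    obtain ⟨W, hWb, hvW, hWV⟩ := bbasis.exists_subset_of_mem_open hvV hV
    exact mem_biUnion ⟨hWb, hWV⟩ (henv1 _ ⟨v, hvW, rfl⟩)
  have hdiff : T \ f '' V ⊆ M := by
    rintro x ⟨hxT, hxV⟩
    by_contra hxM
    obtain ⟨W₀, ⟨hW₀b, hW₀V⟩, hxW₀⟩ := mem_iUnion₂.1 hxT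
    -- recursive construction
    have hstep : ∀ s : {W : Set G // W ∈ b ∧ x ∈ env (f '' W)},
        ∃ t : {W : Set G // W ∈ b ∧ x ∈ env (f '' W)},
          closure (t : Set G) ⊆ (s : Set G) ∧
          EMetric.diam (t : Set G) ≤ min (EMetric.diam (s : Set G)) 1 / 2 := by
      rintro ⟨W, hWb, hxW⟩
      have hin : x ∈ ⋃ W' ∈ N W, env (f '' W') := by
        by_contra hxn
        exact hxM (mem_biUnion hWb ⟨hxW, hxn⟩)
      obtain ⟨W', hW'N, hxW'⟩ := mem_iUnion₂.1 hin
      exact ⟨⟨W', hW'N.1, hxW'⟩, hW'N.2.1, hW'N.2.2⟩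
    choose step hstep1 hstep2 using hstep
    set F : ℕ → {W : Set G // W ∈ b ∧ x ∈ env (f '' W)} :=
      fun n => Nat.rec ⟨W₀, hW₀b, hxW₀⟩ (fun _ s => step s) n with hF
    have hF1 : ∀ n, closure ((F (n + 1) : Set G)) ⊆ (F n : Set G) := fun n => hstep1 (F n)
    have hF2 : ∀ n, EMetric.diam ((F (n + 1) : Set G)) ≤
        min (EMetric.diam ((F n : Set G))) 1 / 2 := fun n => hstep2 (F n)
    have hanti : Antitone (fun n => (F n : Set G)) :=
      antitone_nat_of_succ_le fun n => subset_closure.trans (hF1 n)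
    have hdiam : ∀ n, EMetric.diam ((F (n + 1) : Set G)) ≤ 2⁻¹ ^ (n + 1) := by
      intro n
      induction n with
      | zero =>
        refine (hF2 0).trans ?_
        calc min (EMetric.diam ((F 0 : Set G))) 1 / 2 ≤ 1 / 2 :=
              ENNReal.div_le_div_right (min_le_right _ _) 2
          _ = 2⁻¹ ^ (0 + 1) := by rw [pow_one, one_div]
      | succ k ih =>
        refine (hF2 (k + 1)).trans ?_
        calc min (EMetric.diam ((F (k + 1) : Set G))) 1 / 2
            ≤ EMetric.diam ((F (k + 1) : Set G)) / 2 :=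
              ENNReal.div_le_div_right (min_le_left _ _) 2
          _ ≤ (2⁻¹ ^ (k + 1)) / 2 := ENNReal.div_le_div_right ih 2
          _ = 2⁻¹ ^ (k + 2) := by
              rw [div_eq_mul_inv, ← pow_succ]
    have hne : ∀ n, ((F n : Set G)).Nonempty := by
      intro n
      rw [nonempty_iff_ne_empty]
      intro h
      exact bne (h ▸ (F n).2.1)
    choose gs hgs using hne
    have hmem : ∀ m n, m ≤ n → gs n ∈ (F m : Set G) := fun m n h => hanti h (hgs n)
    have hpow : ∀ k : ℕ, (2⁻¹ : ENNReal) ^ (k + 1) ≤ 2⁻¹ ^ k := by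
      intro k
      rw [pow_succ]
      calc (2⁻¹ : ENNReal) ^ k * 2⁻¹ ≤ 2⁻¹ ^ k * 1 := mul_le_mul_right (by simp) _
        _ = 2⁻¹ ^ k := mul_one _
    have hcauchy : CauchySeq gs := by
      rw [EMetric.cauchySeq_iff]
      intro δ hδ
      obtain ⟨k, hk⟩ := ENNReal.exists_inv_two_pow_lt (ne_of_gt hδ)
      refine ⟨k + 1, fun m hm n hn => ?_⟩
      calc edist (gs m) (gs n)
          ≤ EMetric.diam ((F (k + 1) : Set G)) :=
            EMetric.edist_le_diam_of_mem (hmem _ _ hm) (hmem _ _ hn)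
        _ ≤ 2⁻¹ ^ (k + 1) := hdiam k
        _ ≤ 2⁻¹ ^ k := hpow k
        _ < δ := hk
    obtain ⟨g, hg⟩ := cauchySeq_tendsto_of_complete hcauchy
    have hgF : ∀ n, g ∈ (F n : Set G) := by
      intro n
      refine hF1 n (mem_closure_of_tendsto hg ?_)
      filter_upwards [eventually_ge_atTop (n + 1)] with m hm
      exact hmem _ _ hm
    have hxcl : ∀ n, x ∈ closure (f '' (F n : Set G)) := fun n => henv2 _ (F n).2.2
    have hkey : ∀ δ : ENNReal, 0 < δ → edist x (f g) ≤ δ := by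
      intro δ hδ
      have hb : f ⁻¹' (EMetric.ball (f g) δ) ∈ 𝓝 g :=
        hf.continuousAt (EMetric.ball_mem_nhds _ hδ)
      obtain ⟨r, hr0, hrb⟩ := EMetric.mem_nhds_iff.1 hb
      obtain ⟨k, hk⟩ := ENNReal.exists_inv_two_pow_lt (ne_of_gt hr0)
      have hWb' : (F (k + 1) : Set G) ⊆ EMetric.ball g r := by
        intro w hw
        calc edist w g ≤ EMetric.diam ((F (k + 1) : Set G)) :=
              EMetric.edist_le_diam_of_mem hw (hgF (k + 1))
          _ ≤ 2⁻¹ ^ (k + 1) := hdiam k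
          _ ≤ 2⁻¹ ^ k := hpow k
          _ < r := hk
      have himg : f '' (F (k + 1) : Set G) ⊆ EMetric.ball (f g) δ := by
        rintro y ⟨w, hw, rfl⟩
        exact hrb (hWb' hw)
      have hcl : closure (f '' (F (k + 1) : Set G)) ⊆ {y : H | edist y (f g) ≤ δ} :=
        closure_minimal (fun y hy => (le_of_lt (EMetric.mem_ball.1 (himg hy)) :
            edist y (f g) ≤ δ))
          (isClosed_le (continuous_id.edist continuous_const) continuous_const)
      exact hcl (hxcl (k + 1))
    have hzero : edist x (f g) = 0 := by
      by_contra hne0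
      have htop : edist x (f g) ≠ ⊤ :=
        ne_top_of_le_ne_top ENNReal.one_ne_top (hkey 1 one_pos)
      have := hkey (edist x (f g) / 2)
        (ENNReal.div_pos hne0 (by simp))
      exact absurd this (not_le.2 (ENNReal.half_lt_self hne0 htop))
    have hxg : x = f g := edist_eq_zero.1 hzero
    exact hxV ⟨g, hW₀V (hgF 0), hxg.symm⟩
  exact hTbm.congr (my_eventuallyEq_of_meagre_diff hsub (hMm.mono hdiff)).symm

section Group

variable {H : Type*} [Group H] [TopologicalSpace H] [IsTopologicalGroup H]

private lemma my_isMeagre_smul {s : Set H} (h : IsMeagre s) (g : H) : IsMeagre (g • s) := by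
  have heq : g • s = (Homeomorph.mulLeft g⁻¹) ⁻¹' s := by
    ext x
    simp [mem_smul_set_iff_inv_smul_mem, smul_eq_mul]
  rw [heq]
  exact h.preimage_of_isOpenMap (Homeomorph.continuous _) (Homeomorph.isOpenMap _)

/-- Pettis' theorem: a nonmeagre Baire measurable subset of a topological group which is a Baire
space satisfies that `A * A⁻¹` is a neighborhood of the identity. -/
private lemma my_pettis [BaireSpace H] {A : Set H} (hA : BaireMeasurableSet A)
    (hnm : ¬ IsMeagre A) : A * A⁻¹ ∈ 𝓝 (1 : H) := by
  obtain ⟨u, huo, hAu⟩ := hA.residualEq_isOpen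
  have h1 : IsMeagre (u \ A) := my_meagre_diff_of_eventuallyEq hAu
  have h2 : IsMeagre (A \ u) := my_meagre_diff_of_eventuallyEq hAu.symm
  have hune : u.Nonempty := by
    rcases u.eq_empty_or_nonempty with h | h
    · refine absurd (h2.mono (fun x hx => ⟨hx, by simp [h]⟩ : A ⊆ A \ u)) hnm
    · exact h
  have hsubset : u * u⁻¹ ⊆ A * A⁻¹ := by
    rintro g ⟨a, ha, binv, hbinv, rfl⟩
    -- a ∈ u ∩ (a * binv) • u
    have hWne : (u ∩ (a * binv) • u).Nonempty := by
      refine ⟨a, ha, ?_⟩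
      rw [mem_smul_set_iff_inv_smul_mem, smul_eq_mul]
      have heq : (a * binv)⁻¹ * a = binv⁻¹ := by
        rw [mul_inv_rev, mul_assoc, inv_mul_cancel, mul_one]
      rw [heq]
      exact Set.mem_inv.1 hbinv
    have hWo : IsOpen (u ∩ (a * binv) • u) := huo.inter (huo.smul _)
    set m : Set H := (u \ A) ∪ (a * binv) • (u \ A) with hm
    have hmm : IsMeagre m := my_isMeagre_union h1 (my_isMeagre_smul h1 _)
    have hint : ((u ∩ (a * binv) • u) \ m).Nonempty := by
      by_contra hempty
      rw [not_nonempty_iff_eq_empty, diff_eq_empty] at hempty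
      exact my_not_isMeagre_of_isOpen hWo hWne (hmm.mono hempty)
    obtain ⟨x, ⟨hxu, hxgu⟩, hxm⟩ := hint
    have hxA : x ∈ A := by
      by_contra hxA
      exact hxm (Or.inl ⟨hxu, hxA⟩)
    have hxgA : (a * binv)⁻¹ * x ∈ A := by
      rw [mem_smul_set_iff_inv_smul_mem, smul_eq_mul] at hxgu
      by_contra hxgA
      refine hxm (Or.inr ?_)
      rw [mem_smul_set_iff_inv_smul_mem, smul_eq_mul]
      exact ⟨hxgu, hxgA⟩
    refine ⟨x, hxA, ((a * binv)⁻¹ * x)⁻¹, by rwa [Set.mem_inv, inv_inv], ?_⟩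
    show x * ((a * binv)⁻¹ * x)⁻¹ = a * binv
    rw [mul_inv_rev, inv_inv, ← mul_assoc, mul_inv_cancel, one_mul]
  refine mem_of_superset ?_ hsubset
  refine IsOpen.mem_nhds (huo.mul_right) ?_
  obtain ⟨c, hc⟩ := hune
  exact ⟨c, hc, c⁻¹, by rwa [Set.mem_inv, inv_inv], mul_inv_cancel c⟩

end Group

private lemma my_image_nhds_one {G H : Type*} [Group G] [TopologicalSpace G]
    [IsTopologicalGroup G] [PolishSpace G] [Group H] [TopologicalSpace H] [IsTopologicalGroup H]
    [PolishSpace H] (f : G →* H) (hc : Continuous f) (hs : Function.Surjective f) :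
    ∀ U ∈ 𝓝 (1 : G), f '' U ∈ 𝓝 (1 : H) := by
  intro U hU
  obtain ⟨V, hVo, hV1, hVU⟩ := exists_open_nhds_one_mul_subset hU
  set W : Set G := V ∩ V⁻¹ with hWdef
  have hWo : IsOpen W := hVo.inter hVo.inv
  have hW1 : (1 : G) ∈ W := ⟨hV1, by simpa using hV1⟩
  have hWsym : ∀ x ∈ W, x⁻¹ ∈ W := by
    rintro x ⟨hx1, hx2⟩
    exact ⟨hx2, by simpa using hx1⟩
  letI := upgradeIsCompletelyMetrizable H
  haveI : BaireSpace H := inferInstance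
  set A : Set H := f '' W with hA
  have hAbm : BaireMeasurableSet A := my_bp_image hc hWo
  have hAnm : ¬ IsMeagre A := by
    intro hAm
    obtain ⟨D, Dct, Ddense⟩ := exists_countable_dense G
    have hcover : (univ : Set H) ⊆ ⋃ g : D, ((f (g : G)) • A) := by
      intro y _
      obtain ⟨x, rfl⟩ := hs y
      have hxW : IsOpen (x • W) := hWo.smul x
      have hxWne : (x • W).Nonempty := ⟨x, 1, hW1, mul_one x⟩
      obtain ⟨g, hgxW, hgD⟩ := Ddense.inter_open_nonempty _ hxW hxWne
      rw [mem_smul_set_iff_inv_smul_mem, smul_eq_mul] at hgxW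
      refine mem_iUnion.2 ⟨⟨g, hgD⟩, ?_⟩
      rw [mem_smul_set_iff_inv_smul_mem, smul_eq_mul]
      refine ⟨(x⁻¹ * g)⁻¹, hWsym _ hgxW, ?_⟩
      rw [← map_inv, ← map_mul]
      congr 1
      group
    haveI : Countable D := Dct.to_subtype
    have : IsMeagre (univ : Set H) :=
      (my_isMeagre_iUnion fun g : D => my_isMeagre_smul hAm _).mono hcover
    have hd : Dense ((univ : Set H)ᶜ) := dense_of_mem_residual this
    obtain ⟨z, hz⟩ := hd.nonempty
    exact hz (mem_univ z)
  have hAA : A * A⁻¹ ∈ 𝓝 (1 : H) := my_pettis hAbm hAnm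
  refine mem_of_superset hAA ?_
  rintro y ⟨y₁, hy₁, y₂inv, hy₂, rfl⟩
  obtain ⟨a, haW, rfl⟩ := hy₁
  rw [Set.mem_inv] at hy₂
  obtain ⟨c, hcW, hc⟩ := hy₂
  have hy2 : y₂inv = f c⁻¹ := by rw [map_inv, hc, inv_inv]
  show f a * y₂inv ∈ ⇑f '' U
  rw [hy2, ← map_mul]
  exact ⟨a * c⁻¹, hVU ⟨a, haW.1, c⁻¹, (hWsym c hcW).1, rfl⟩, rfl⟩

private lemma my_isOpenMap {G H : Type*} [Group G] [TopologicalSpace G]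
    [IsTopologicalGroup G] [PolishSpace G] [Group H] [TopologicalSpace H] [IsTopologicalGroup H]
    [PolishSpace H] (f : G →* H) (hc : Continuous f) (hs : Function.Surjective f) :
    IsOpenMap f := by
  intro U hUo
  rw [isOpen_iff_mem_nhds]
  rintro y ⟨x, hxU, rfl⟩
  have h1 : x⁻¹ • U ∈ 𝓝 (1 : G) := by
    refine (hUo.smul x⁻¹).mem_nhds ?_
    rw [mem_smul_set_iff_inv_smul_mem, smul_eq_mul, inv_inv, mul_one]
    exact hxU
  have h2 : f '' (x⁻¹ • U) ∈ 𝓝 (1 : H) := my_image_nhds_one f hc hs _ h1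
  have heq : f '' U = f x • (f '' (x⁻¹ • U)) := by
    ext z
    rw [mem_smul_set_iff_inv_smul_mem, smul_eq_mul]
    constructor
    · rintro ⟨u, huU, rfl⟩
      refine ⟨x⁻¹ * u, ?_, by rw [map_mul, map_inv]⟩
      rw [mem_smul_set_iff_inv_smul_mem, smul_eq_mul, inv_inv]
      rwa [← mul_assoc, mul_inv_cancel, one_mul]
    · rintro ⟨w, hwU, hw⟩
      rw [mem_smul_set_iff_inv_smul_mem, smul_eq_mul, inv_inv] at hwU
      refine ⟨x * w, hwU, ?_⟩
      rw [map_mul, hw, ← mul_assoc, mul_inv_cancel, one_mul]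
  rw [heq]
  obtain ⟨O, hOsub, hOo, hO1⟩ := mem_nhds_iff.1 h2
  refine mem_nhds_iff.2 ⟨f x • O, ?_, hOo.smul _, ?_⟩
  · intro z hz
    rw [mem_smul_set_iff_inv_smul_mem] at hz ⊢
    exact hOsub hz
  · rw [mem_smul_set_iff_inv_smul_mem, smul_eq_mul, inv_mul_cancel]
    exact hO1

theorem stmt_12 {G H : Type*} [Group G] [TopologicalSpace G] [IsTopologicalGroup G]
    [PolishSpace G] [Group H] [TopologicalSpace H] [IsTopologicalGroup H]
    [PolishSpace H] (f : G →* H) (hc : Continuous f)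
    (hs : Function.Surjective f) :
    IsHomeomorph (QuotientGroup.quotientKerEquivOfSurjective f hs) ∧ IsOpenMap f := by
  have hopen : IsOpenMap f := my_isOpenMap f hc hs
  set e := QuotientGroup.quotientKerEquivOfSurjective f hs with he
  have hmk : ∀ g : G, e (QuotientGroup.mk g) = f g := fun g => QuotientGroup.kerLift_mk f g
  have hcont : Continuous e := by
    refine (QuotientGroup.isQuotientMap_mk (f.ker)).continuous_iff.2 ?_
    have heq : (e : G ⧸ f.ker → H) ∘ QuotientGroup.mk = f := funext hmk
    rw [heq]
    exact hc
  have heopen : IsOpenMap e := by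
    intro S hS
    have himg : (e : G ⧸ f.ker → H) '' S = f '' ((QuotientGroup.mk : G → G ⧸ f.ker) ⁻¹' S) := by
      ext y
      constructor
      · rintro ⟨q, hq, rfl⟩
        obtain ⟨g, rfl⟩ := QuotientGroup.mk_surjective q
        exact ⟨g, hq, hmk g⟩
      · rintro ⟨g, hg, rfl⟩
        exact ⟨QuotientGroup.mk g, hg, hmk g⟩
    rw [himg]
    exact hopen _ (hS.preimage QuotientGroup.continuous_mk)
  exact ⟨⟨hcont, heopen, e.bijective⟩, hopen⟩
end

section
/- Let G and H be topological abelian groups, let G₀ ⊆ G and H₀ ⊆ H be the closures of the identity, and let β : G → H be a continuous homomorphism mapping G₀ into H₀. If β is surjective, β restricted to G₀ surjects onto H₀, and the induced map of Hausdorff quotients β̄ : G/G₀ → H/H₀ is open, then β is an open map. -/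
private lemma aux_add_closure_bot {H : Type*} [AddCommGroup H] [TopologicalSpace H]
    [IsTopologicalAddGroup H] {V : Set H} (hV : IsOpen V) {v x : H} (hv : v ∈ V)
    (hx : x ∈ (⊥ : AddSubgroup H).topologicalClosure) : v + x ∈ V := by
  have hnx : -x ∈ (⊥ : AddSubgroup H).topologicalClosure := neg_mem hx
  have hcl : -x ∈ closure ({0} : Set H) := by
    rw [← AddSubgroup.coe_topologicalClosure_bot H]; exact hnx
  rw [mem_closure_iff] at hcl
  obtain ⟨y, hy, hy0⟩ := hcl {y | v + x + y ∈ V}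
    (hV.preimage (continuous_const.add continuous_id)) (by simpa using hv)
  simp only [Set.mem_singleton_iff] at hy0
  subst hy0
  simpa using hy

theorem stmt_13 {G H : Type*} [AddCommGroup G] [TopologicalSpace G]
    [IsTopologicalAddGroup G] [AddCommGroup H] [TopologicalSpace H]
    [IsTopologicalAddGroup H] (β : G →+ H) (hc : Continuous β)
    (hmap : (⊥ : AddSubgroup G).topologicalClosure ≤
      ((⊥ : AddSubgroup H).topologicalClosure).comap β)
    (hsurj : Function.Surjective β)
    (hsurj₀ : ∀ h ∈ (⊥ : AddSubgroup H).topologicalClosure,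
      ∃ g ∈ (⊥ : AddSubgroup G).topologicalClosure, β g = h)
    (hopen : IsOpenMap (QuotientAddGroup.map
      ((⊥ : AddSubgroup G).topologicalClosure)
      ((⊥ : AddSubgroup H).topologicalClosure) β hmap)) :
    IsOpenMap β := by
  set N := (⊥ : AddSubgroup G).topologicalClosure with hN
  set M := (⊥ : AddSubgroup H).topologicalClosure with hM
  intro U hU
  have key : β '' U = (QuotientAddGroup.mk' M) ⁻¹'
      ((QuotientAddGroup.map N M β hmap) '' ((QuotientAddGroup.mk' N) '' U)) := by
    ext h
    constructor
    · rintro ⟨u, hu, rfl⟩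
      exact ⟨QuotientAddGroup.mk' N u, ⟨u, hu, rfl⟩, rfl⟩
    · rintro ⟨q, ⟨u, hu, rfl⟩, heq⟩
      have heq' : (QuotientAddGroup.mk' M) (β u) = (QuotientAddGroup.mk' M) h := by
        simpa [QuotientAddGroup.map_mk'] using heq
      rw [QuotientAddGroup.mk'_eq_mk'] at heq'
      obtain ⟨z, hz, rfl⟩ := heq'
      obtain ⟨g, hg, rfl⟩ := hsurj₀ z hz
      exact ⟨u + g, aux_add_closure_bot hU hu hg, by simp⟩
  rw [key]
  exact continuous_quot_mk.isOpen_preimage _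
    (hopen _ (QuotientAddGroup.isOpenMap_coe (N := N) _ hU))
end

section
/- Let G, H, K be Polish groups with K abelian, and let m : G × H → K be a map that is a homomorphism in each variable separately (biadditive) and separately continuous. Then m is jointly continuous. -/
open Topology

theorem stmt_15 {G H K : Type*} [Group G] [TopologicalSpace G] [IsTopologicalGroup G]
    [PolishSpace G] [Group H] [TopologicalSpace H] [IsTopologicalGroup H]
    [PolishSpace H] [CommGroup K] [TopologicalSpace K] [IsTopologicalGroup K]
    [PolishSpace K] (m : G → H → K)
    (hG : ∀ g₁ g₂ h, m (g₁ * g₂) h = m g₁ h * m g₂ h)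
    (hH : ∀ g h₁ h₂, m g (h₁ * h₂) = m g h₁ * m g h₂)
    (hcG : ∀ h, Continuous fun g => m g h)
    (hcH : ∀ g, Continuous fun h => m g h) :
    Continuous fun p : G × H => m p.1 p.2 := by
  classical
  have h1H : ∀ g, m g 1 = 1 := fun g => by
    have := hH g 1 1
    rw [mul_one] at this
    exact (left_eq_mul.mp this)
  have h1G : ∀ h, m 1 h = 1 := fun h => by
    have := hG 1 1 h
    rw [mul_one] at this
    exact (left_eq_mul.mp this)
  -- joint continuity at (1, 1) via a Baire category argument
  have key : ContinuousAt (fun p : G × H => m p.1 p.2) (1, 1) := by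
    letI := TopologicalSpace.upgradeIsCompletelyMetrizable G
    letI := TopologicalSpace.upgradeIsCompletelyMetrizable H
    rw [ContinuousAt]
    have h11 : m (1 : G) (1 : H) = 1 := h1G 1
    rw [h11, Filter.tendsto_def]
    intro W hW
    -- a closed neighborhood W₁ of 1 with W₁ * W₁ ⊆ W
    obtain ⟨V, hV, hVW⟩ := exists_nhds_one_split hW
    obtain ⟨W₁, hW₁, hW₁c, hW₁V⟩ := exists_mem_nhds_isClosed_subset hV
    -- a countable antitone basis of 𝓝 1 in H
    obtain ⟨V', hV'⟩ := (𝓝 (1 : H)).exists_antitone_basis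
    set A : ℕ → Set G := fun n => {g | ∀ h ∈ V' n, m g h ∈ W₁} with hA
    have hAclosed : ∀ n, IsClosed (A n) := by
      intro n
      have : A n = ⋂ h ∈ V' n, (fun g => m g h) ⁻¹' W₁ := by
        ext g; simp [hA]
      rw [this]
      exact isClosed_biInter fun h _ => hW₁c.preimage (hcG h)
    have hAunion : ⋃ n, A n = Set.univ := by
      ext g
      simp only [Set.mem_iUnion, Set.mem_univ, iff_true]
      have hm : (fun h => m g h) ⁻¹' W₁ ∈ 𝓝 (1 : H) := by
        have hc := (hcH g).continuousAt (x := (1 : H))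
        rw [ContinuousAt, h1H] at hc
        exact hc hW₁
      obtain ⟨n, -, hn⟩ := hV'.toHasBasis.mem_iff.mp hm
      exact ⟨n, fun h hh => hn hh⟩
    obtain ⟨n, g₀, hg₀⟩ := nonempty_interior_of_iUnion_of_closed hAclosed hAunion
    -- neighborhood of 1 in G
    have hU : (fun g => g₀ * g) ⁻¹' interior (A n) ∈ 𝓝 (1 : G) := by
      have hc : ContinuousAt (fun g : G => g₀ * g) 1 := (continuous_mul_left g₀).continuousAt
      have : interior (A n) ∈ 𝓝 (g₀ * 1) := by
        rw [mul_one]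
        exact isOpen_interior.mem_nhds hg₀
      exact hc.preimage_mem_nhds this
    -- neighborhood of 1 in H
    have hV'' : V' n ∩ (fun h => m g₀⁻¹ h) ⁻¹' W₁ ∈ 𝓝 (1 : H) := by
      refine Filter.inter_mem (hV'.toHasBasis.mem_of_mem trivial) ?_
      have hc := (hcH g₀⁻¹).continuousAt (x := (1 : H))
      rw [ContinuousAt, h1H] at hc
      exact hc hW₁
    have hmem : ((fun g => g₀ * g) ⁻¹' interior (A n)) ×ˢ
        (V' n ∩ (fun h => m g₀⁻¹ h) ⁻¹' W₁) ∈ 𝓝 ((1 : G), (1 : H)) := by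
      rw [nhds_prod_eq]
      exact Filter.prod_mem_prod hU hV''
    refine Filter.mem_of_superset hmem ?_
    rintro ⟨g, h⟩ ⟨hg, hh1, hh2⟩
    have hg' : g₀ * g ∈ A n := interior_subset hg
    have e1 : m (g₀ * g) h ∈ W₁ := hg' h hh1
    have e2 : m g₀⁻¹ h ∈ W₁ := hh2
    have : m g h = m g₀⁻¹ h * m (g₀ * g) h := by
      rw [← hG g₀⁻¹ (g₀ * g) h, inv_mul_cancel_left]
    simp only [Set.mem_preimage]
    rw [this]
    exact hVW _ (hW₁V e2) _ (hW₁V e1)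
  -- bundle m as a homomorphism in two variables and conclude
  let f : G →* H →* K :=
    { toFun := fun g =>
        { toFun := m g
          map_one' := h1H g
          map_mul' := hH g }
      map_one' := MonoidHom.ext fun h => h1G h
      map_mul' := fun g₁ g₂ => MonoidHom.ext fun h => hG g₁ g₂ h }
  exact continuous_of_continuousAt_one₂ f key (fun x => (hcH x).continuousAt)
    (fun y => (hcG y).continuousAt)
end
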